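/- In an action profile on a social network, if buyer i diffuses the auction information to a set r_i' of her neighbors and the set of buyers having i as a diffusion critical node (together with i itself) is d_i', and if she instead diffuses to a superset r_i'' ⊇ r_i' yielding set d_i'', then d_i' ⊆ d_i''. (Monotonicity of the diffusion-dependent set in the diffusion action.) -/

import Mathlib

/-- A diffusion path from the seller `s` to agent `j`: a nonempty list starting at `s`,
ending at `j`, in which each agent passes the information to the next one
(i.e. the next agent belongs to the diffusion set of the previous one). -/
def IsDiffPath {N : Type} (σ : N → Finset N) (s j : N) (p : List N) : Prop :=
  p ≠ [] ∧ p.head? = some s ∧ p.getLast? = some j ∧ List.Chain' (fun a b => b ∈ σ a) p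

/-- Agent `j` is informed if some diffusion path from the seller reaches her. -/
def Informed {N : Type} (σ : N → Finset N) (s j : N) : Prop :=
  ∃ p, IsDiffPath σ s j p

/-- Buyer `i` is a diffusion critical node of buyer `j`: `j` is informed and every
diffusion path from the seller `s` to `j` passes through `i` (and `i ≠ j`). -/
def Critical {N : Type} (σ : N → Finset N) (s i j : N) : Prop :=
  i ≠ j ∧ Informed σ s j ∧ ∀ p, IsDiffPath σ s j p → i ∈ p

/-- `d_i`: buyer `i` together with all buyers having `i` as a diffusion critical node. -/
def dset {N : Type} (σ : N → Finset N) (s i : N) : Set N :=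
  {i} ∪ {j | Critical σ s i j}

lemma chain'_mono {N : Type} {σ₁ σ₂ : N → Finset N} (h : ∀ a, σ₁ a ⊆ σ₂ a) :
    ∀ p : List N, List.Chain' (fun a b => b ∈ σ₁ a) p → List.Chain' (fun a b => b ∈ σ₂ a) p :=
  fun p hp => hp.imp (fun a b hab => h a hab)

lemma path_mono {N : Type} {σ₁ σ₂ : N → Finset N} (h : ∀ a, σ₁ a ⊆ σ₂ a) {s j : N} {p : List N}
    (hp : IsDiffPath σ₁ s j p) : IsDiffPath σ₂ s j p :=
  ⟨hp.1, hp.2.1, hp.2.2.1, chain'_mono h p hp.2.2.2⟩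

lemma chain'_avoid {N : Type} {σ₁ σ₂ : N → Finset N} {i : N}
    (h : ∀ a, a ≠ i → σ₁ a = σ₂ a) :
    ∀ p : List N, i ∉ p → List.Chain' (fun a b => b ∈ σ₂ a) p →
      List.Chain' (fun a b => b ∈ σ₁ a) p := by
  intro p
  induction p with
  | nil => intro _ _; exact List.isChain_nil
  | cons a t ih =>
    intro hni hc
    cases t with
    | nil => exact List.isChain_singleton a
    | cons b u =>
      unfold List.Chain' at hc ⊢
      rw [List.isChain_cons_cons] at hc ⊢
      refine ⟨?_, ih (fun hm => hni (List.mem_cons_of_mem a hm)) hc.2⟩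
      have ha : a ≠ i := fun e => hni (e ▸ List.mem_cons_self (a := a) (l := _))
      rw [h a ha]
      exact hc.1

/-- fixing the diffusion choices of everyone else, if buyer `i`
diffuses to a set `r'` of neighbors and instead to a superset `r'' ⊇ r'`,
then the corresponding dependent sets satisfy `d_i' ⊆ d_i''`. -/
theorem dset_monotone_in_diffusion {N : Type} [DecidableEq N]
    (σ : N → Finset N) (s i : N) (r' r'' : Finset N) (h : r' ⊆ r'') :
    dset (Function.update σ i r') s i ⊆ dset (Function.update σ i r'') s i := by
  intro j hj
  have hmono : ∀ a, Function.update σ i r' a ⊆ Function.update σ i r'' a := by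
    intro a
    by_cases ha : a = i
    · subst ha; simp [Function.update_self]; exact h
    · simp [Function.update_of_ne ha]
  rcases hj with hj | hj
  · exact Or.inl hj
  · rcases hj with ⟨hij, ⟨p, hp⟩, hcrit⟩
    refine Or.inr ⟨hij, ⟨p, path_mono hmono hp⟩, ?_⟩
    intro q hq
    by_contra hiq
    have hagree : ∀ a : N, a ≠ i →
        Function.update σ i r' a = Function.update σ i r'' a := by
      intro a ha; simp [Function.update_of_ne ha]
    have : IsDiffPath (Function.update σ i r') s j q :=
      ⟨hq.1, hq.2.1, hq.2.2.1, chain'_avoid hagree q hiq hq.2.2.2⟩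
    exact hiq (hcrit q this)
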